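/- arXiv:1008.4971 — 2 statements merged into one kernel-verified Lean document; each statement's English description precedes it below -/
import Mathlib

section
/- Let K be an algebraically closed field and let i, j, k ∈ ℕⁿ be non-collinear points with componentwise infimum of {i, j, k} equal to 0, such that there is no prime p with char K = p and i, j, k ∈ pℕⁿ. Then every polynomial P = a_i X^i + a_j X^j + a_k X^k with a_i, a_j, a_k ∈ K* is irreducible. -/
open Polynomial in
lemma strip_X {R : Type*} [CommRing R] [IsDomain R] :
    ∀ p : R[X], p ≠ 0 → ∃ d r, p = X ^ d * (r : R[X]) ∧ r.coeff 0 ≠ 0 := by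
  suffices H : ∀ N (p : R[X]), p ≠ 0 → p.natDegree = N →
      ∃ d r, p = X ^ d * (r : R[X]) ∧ r.coeff 0 ≠ 0 by
    exact fun p hp => H p.natDegree p hp rfl
  intro N
  induction N using Nat.strong_induction_on with
  | _ N ih =>
    intro p hp hn
    by_cases h0 : p.coeff 0 = 0
    · obtain ⟨p', rfl⟩ := Polynomial.X_dvd_iff.mpr h0
      have hp' : p' ≠ 0 := by rintro rfl; simp at hp
      have hdeg : p'.natDegree < N := by
        subst hn
        rw [Polynomial.natDegree_mul (Polynomial.X_ne_zero) hp', Polynomial.natDegree_X]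
        omega
      obtain ⟨d, r, h1, h2⟩ := ih _ hdeg p' hp' rfl
      exact ⟨d + 1, r, by rw [h1]; ring, h2⟩
    · exact ⟨0, p, by simp, h0⟩

open Polynomial in
lemma cancel_X_pow {R : Type*} [CommRing R] [IsDomain R] :
    ∀ (u v : R[X]) (α β : ℕ), X ^ α * u = X ^ β * v → u.coeff 0 ≠ 0 → v.coeff 0 ≠ 0 →
      α = β ∧ u = v := by
  have key : ∀ (u v : R[X]) (α β : ℕ), α ≤ β → X ^ α * u = X ^ β * v → u.coeff 0 ≠ 0 →
      v.coeff 0 ≠ 0 → α = β ∧ u = v := by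
    intro u v α β hle h hu hv
    have hβ : β = α + (β - α) := by omega
    rw [hβ, pow_add, mul_assoc] at h
    have h2 : u = X ^ (β - α) * v :=
      mul_left_cancel₀ (pow_ne_zero _ Polynomial.X_ne_zero) h
    have hd0 : β - α = 0 := by
      by_contra hne
      apply hu
      have : (X : R[X]) ∣ u := by
        rw [h2]
        exact Dvd.dvd.mul_right (dvd_pow_self _ hne) v
      exact Polynomial.X_dvd_iff.mp this
    constructor
    · omega
    · rw [h2, hd0, pow_zero, one_mul]
  intro u v α β h hu hv
  rcases le_total α β with hle | hle
  · exact key u v α β hle h hu hv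
  · obtain ⟨h1, h2⟩ := key v u β α hle h.symm hv hu
    exact ⟨h1.symm, h2.symm⟩

open Polynomial in
lemma exists_simple_root {K : Type*} [Field K] [IsAlgClosed K] (a b : K) (ha : a ≠ 0) (hb : b ≠ 0)
    (g : ℕ) (hg1 : 1 ≤ g) (hgK : (g : K) ≠ 0) :
    ∃ ρ : K, ρ ≠ 0 ∧ (X - C ρ) ∣ (C a + C b * X ^ g) ∧
      ¬ (X - C ρ) ^ 2 ∣ (C a + C b * X ^ g) := by
  obtain ⟨ρ, hρ⟩ := IsAlgClosed.exists_pow_nat_eq (-a/b) (by omega : 0 < g)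
  have hd : -a/b ≠ 0 := div_ne_zero (neg_ne_zero.mpr ha) hb
  have hρ0 : ρ ≠ 0 := by
    intro h; rw [h, zero_pow (by omega : g ≠ 0)] at hρ; exact hd hρ.symm
  have heval : (C a + C b * X ^ g).eval ρ = 0 := by
    simp only [eval_add, eval_C, eval_mul, eval_pow, eval_X, hρ]
    field_simp
    ring
  refine ⟨ρ, hρ0, (dvd_iff_isRoot).mpr heval, ?_⟩
  rintro ⟨u, hu⟩
  have hder : (C a + C b * X ^ g).derivative = C b * (C (g : K) * X ^ (g - 1)) := by
    simp [derivative_add, derivative_C_mul, derivative_X_pow]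
  have h1 : ((C a + C b * X ^ g).derivative).eval ρ = b * (g : K) * ρ ^ (g - 1) := by
    rw [hder]; simp [mul_assoc]
  have h2 : ((C a + C b * X ^ g).derivative).eval ρ = 0 := by
    rw [hu, derivative_mul, derivative_pow]
    simp only [derivative_sub, derivative_X, derivative_C, sub_zero, mul_one]
    simp [eval_add, eval_mul, eval_pow]
  rw [h1] at h2
  exact (mul_ne_zero (mul_ne_zero hb hgK) (pow_ne_zero _ hρ0)) h2

open Polynomial in
lemma eisenstein_core {K : Type*} [Field K] [IsAlgClosed K] (a b c : K)
    (ha : a ≠ 0) (hb : b ≠ 0) (hc : c ≠ 0)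
    (Ai Aj Ak h : ℕ) (hij : Ai < Aj) (hmin : min Ai Ak = 0) (hh : 1 ≤ h)
    (hgK : ((Aj - Ai : ℕ) : K) ≠ 0) :
    Irreducible ((Polynomial.C (C a * X ^ Ai + C b * X ^ Aj) +
      Polynomial.C (C c * X ^ Ak) * X ^ h : (Polynomial K)[X])) := by
  set g : ℕ := Aj - Ai with hg
  have hg1 : 1 ≤ g := by omega
  set n1 : K[X] := C a * X ^ Ai + C b * X ^ Aj with hn1
  set n2 : K[X] := C c * X ^ Ak with hn2
  have hn1fac : n1 = X ^ Ai * (C a + C b * X ^ g) := by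
    rw [hn1, show Aj = Ai + g from by omega]; ring
  have hn1c : n1 ≠ 0 := by
    intro hz
    have := congrArg (fun p => Polynomial.coeff p Ai) hz
    simp only [hn1, coeff_add, coeff_C_mul, coeff_X_pow, if_pos rfl, coeff_zero] at this
    rw [if_neg (by omega : ¬ Ai = Aj)] at this
    simp at this
    exact ha this
  have hn2c : n2 ≠ 0 := mul_ne_zero (by simpa using hc) (pow_ne_zero _ X_ne_zero)
  set f : (K[X])[X] := Polynomial.C n1 + Polynomial.C n2 * X ^ h with hf
  -- coefficients of f
  have hcoeff : ∀ ν : ℕ, f.coeff ν =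
      (if ν = 0 then n1 else 0) + (if ν = h then n2 else 0) := by
    intro ν
    rw [hf, coeff_add, coeff_C, coeff_C_mul, coeff_X_pow]
    congr 1
    split <;> simp
  have hdeg : f.degree = h := by
    rw [hf]
    rw [degree_add_eq_right_of_degree_lt, degree_C_mul_X_pow _ hn2c]
    rw [degree_C_mul_X_pow _ hn2c]
    calc (Polynomial.C n1).degree ≤ 0 := degree_C_le
    _ < (h : WithBot ℕ) := by exact_mod_cast Nat.cast_pos.mpr (by omega)
  have hndeg : f.natDegree = h := natDegree_eq_of_degree_eq_some hdeg
  have hlead : f.leadingCoeff = n2 := by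
    rw [leadingCoeff, hndeg, hcoeff, if_neg (by omega), if_pos rfl, zero_add]
  -- the Eisenstein prime
  obtain ⟨ρ, hρ0, hρd, hρ2⟩ := exists_simple_root a b ha hb g hg1 hgK
  set π : K[X] := X - C ρ with hπ
  have hπ0 : π ≠ 0 := X_sub_C_ne_zero ρ
  have hπprime : Prime π := prime_X_sub_C ρ
  have hπX : ¬ π ∣ X := by
    intro hd
    have := dvd_iff_isRoot.mp hd
    simp [IsRoot] at this
    exact hρ0 this
  have hπXpow : ∀ m : ℕ, ¬ π ∣ X ^ m := fun m hd => hπX (hπprime.dvd_of_dvd_pow hd)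
  refine irreducible_of_eisenstein_criterion
    ((Ideal.span_singleton_prime hπ0).mpr hπprime) ?_ ?_ ?_ ?_ ?_
  · -- leading coeff not in P
    rw [hlead, Ideal.mem_span_singleton]
    intro hd
    rcases hπprime.2.2 _ _ hd with hd1 | hd2
    · exact hπprime.2.1 (isUnit_of_dvd_unit hd1 (isUnit_C.mpr (Ne.isUnit hc)))
    · exact hπXpow _ hd2
  · -- lower coefficients in P
    intro ν hν
    rw [hcoeff, Ideal.mem_span_singleton]
    have hνh : ν ≠ h := by
      intro hE; rw [hE, hdeg] at hν; exact lt_irrefl _ hν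
    rw [if_neg hνh, add_zero]
    split
    · rw [hn1fac]
      exact Dvd.dvd.mul_left hρd _
    · exact dvd_zero _
  · rw [hdeg]; exact_mod_cast Nat.cast_pos.mpr (by omega)
  · -- coeff 0 not in P^2
    rw [hcoeff, if_pos rfl, if_neg (by omega), add_zero, Ideal.span_singleton_pow,
      Ideal.mem_span_singleton]
    intro hd
    apply hρ2
    rw [hn1fac] at hd
    -- π^2 ∣ X^Ai * f₀ with π ∤ X^Ai implies π^2 ∣ f₀
    set f₀ : K[X] := C a + C b * X ^ g with hf₀
    have h1 : π ∣ f₀ := hρd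
    obtain ⟨f₁, hf₁⟩ := h1
    rw [hf₁] at hd ⊢
    rw [mul_comm π f₁, ← mul_assoc] at hd
    have h2 : π ^ 2 = π * π := sq π
    rw [h2] at hd ⊢
    obtain ⟨w, hw⟩ := hd
    have hcan : X ^ Ai * f₁ = π * w := by
      apply mul_left_cancel₀ hπ0
      linear_combination hw
    have h3 : π ∣ f₁ := by
      have : π ∣ X ^ Ai * f₁ := ⟨w, hcan⟩
      rcases hπprime.2.2 _ _ this with hd1 | hd2
      · exact absurd hd1 (hπXpow _)
      · exact hd2
    exact mul_dvd_mul_left π h3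
  · -- primitive
    intro r hr
    have hr1 : r ∣ n1 := by
      have := (C_dvd_iff_dvd_coeff r f).mp hr 0
      rwa [hcoeff, if_pos rfl, if_neg (by omega), add_zero] at this
    have hr2 : r ∣ n2 := by
      have := (C_dvd_iff_dvd_coeff r f).mp hr h
      rwa [hcoeff, if_neg (by omega), if_pos rfl, zero_add] at this
    rcases Nat.min_eq_zero_iff.mp hmin with hAi | hAk
    · -- Ai = 0 : n1 has nonzero constant coefficient
      by_contra hru
      have hrne : r ≠ 0 := by rintro rfl; exact hn1c (zero_dvd_iff.mp hr1)
      obtain ⟨π₀, hπ₀irr, hπ₀dvd⟩ := WfDvdMonoid.exists_irreducible_factor hru hrne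
      have hπ₀prime : Prime π₀ := hπ₀irr.prime
      have : π₀ ∣ n2 := hπ₀dvd.trans hr2
      rcases hπ₀prime.2.2 _ _ this with hd1 | hd2
      · exact hπ₀irr.1 (isUnit_of_dvd_unit hd1 (isUnit_C.mpr (Ne.isUnit hc)))
      · have hπ₀X : π₀ ∣ X := hπ₀prime.dvd_of_dvd_pow hd2
        have hXr : (X : K[X]) ∣ n1 := by
          have hassoc : Associated π₀ X := hπ₀irr.associated_of_dvd irreducible_X hπ₀X
          exact hassoc.symm.dvd.trans (hπ₀dvd.trans hr1)
        have := X_dvd_iff.mp hXr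
        rw [hn1, coeff_add, coeff_C_mul, coeff_C_mul, coeff_X_pow, coeff_X_pow,
          if_pos hAi.symm, if_neg (by omega : ¬ (0:ℕ) = Aj)] at this
        simp at this
        exact ha this
    · -- Ak = 0 : n2 = C c is a unit
      have : IsUnit n2 := by
        rw [hn2, hAk, pow_zero, mul_one]
        exact isUnit_C.mpr (Ne.isUnit hc)
      exact isUnit_of_dvd_unit hr2 this
open Polynomial in
lemma laurent_factor {K : Type*} [Field K] [IsAlgClosed K] (a b c : K)
    (ha : a ≠ 0) (hb : b ≠ 0) (hc : c ≠ 0)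
    (Ai Aj Ak h : ℕ) (hij : Ai < Aj) (hh : 1 ≤ h)
    (hgK : ((Aj - Ai : ℕ) : K) ≠ 0)
    (A₁ A₂ : LaurentPolynomial (Polynomial K))
    (heq : A₁ * A₂ = toLaurent (Polynomial.C (C a * X ^ Ai + C b * X ^ Aj) +
      Polynomial.C (C c * X ^ Ak) * X ^ h)) :
    (∃ (e : K) (γ : ℕ) (z : ℤ),
        A₁ = LaurentPolynomial.C (C e * X ^ γ) * LaurentPolynomial.T z) ∨
    (∃ (e : K) (γ : ℕ) (z : ℤ),
        A₂ = LaurentPolynomial.C (C e * X ^ γ) * LaurentPolynomial.T z) := by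
  set n1 : K[X] := C a * X ^ Ai + C b * X ^ Aj with hn1
  set n2 : K[X] := C c * X ^ Ak with hn2
  set q : (K[X])[X] := Polynomial.C n1 + Polynomial.C n2 * X ^ h with hqdef
  have hn1c : n1 ≠ 0 := by
    intro hz
    have := congrArg (fun p => Polynomial.coeff p Ai) hz
    simp only [hn1, coeff_add, coeff_C_mul, coeff_X_pow, if_pos rfl, coeff_zero] at this
    rw [if_neg (by omega : ¬ Ai = Aj)] at this
    simp at this
    exact ha this
  have hq0 : q.coeff 0 = n1 := by
    rw [hqdef, coeff_add, coeff_C, if_pos rfl, coeff_C_mul, coeff_X_pow,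
      if_neg (by omega : ¬ (0:ℕ) = h), mul_zero, add_zero]
  have hqh : q.coeff h = n2 := by
    rw [hqdef, coeff_add, coeff_C, if_neg (by omega : ¬ h = 0), coeff_C_mul, coeff_X_pow,
      if_pos rfl, mul_one, zero_add]
  have hqne : q ≠ 0 := by
    intro hz; rw [hz, coeff_zero] at hq0; exact hn1c hq0.symm
  obtain ⟨N₁, p₁, hp₁⟩ := LaurentPolynomial.exists_T_pow A₁
  obtain ⟨N₂, p₂, hp₂⟩ := LaurentPolynomial.exists_T_pow A₂
  have hqpoly : p₁ * p₂ = q * X ^ (N₁ + N₂) := by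
    apply Polynomial.toLaurent_injective
    rw [map_mul, hp₁, hp₂, map_mul, Polynomial.toLaurent_X_pow, mul_mul_mul_comm, heq,
      ← LaurentPolynomial.T_add]
    norm_cast
  have hp₁ne : p₁ ≠ 0 := by
    intro hz; rw [hz, zero_mul] at hqpoly
    exact (mul_ne_zero hqne (pow_ne_zero _ X_ne_zero)) hqpoly.symm
  have hp₂ne : p₂ ≠ 0 := by
    intro hz; rw [hz, mul_zero] at hqpoly
    exact (mul_ne_zero hqne (pow_ne_zero _ X_ne_zero)) hqpoly.symm
  obtain ⟨d₁, r₁, hd₁, hr₁⟩ := strip_X p₁ hp₁ne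
  obtain ⟨d₂, r₂, hd₂, hr₂⟩ := strip_X p₂ hp₂ne
  have hkey : X ^ (d₁ + d₂) * (r₁ * r₂) = X ^ (N₁ + N₂) * q := by
    rw [pow_add]
    calc X ^ d₁ * X ^ d₂ * (r₁ * r₂) = (X ^ d₁ * r₁) * (X ^ d₂ * r₂) := by ring
    _ = p₁ * p₂ := by rw [← hd₁, ← hd₂]
    _ = q * X ^ (N₁ + N₂) := hqpoly
    _ = X ^ (N₁ + N₂) * q := by ring
  obtain ⟨-, hrr⟩ := cancel_X_pow _ _ _ _ hkey
    (by rw [Polynomial.mul_coeff_zero]; exact mul_ne_zero hr₁ hr₂)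
    (by rw [hq0]; exact hn1c)
  -- decompose q = C (X^μ) * q'
  set μ : ℕ := min Ai Ak with hμ
  set q' : (K[X])[X] := Polynomial.C (C a * X ^ (Ai - μ) + C b * X ^ (Aj - μ)) +
    Polynomial.C (C c * X ^ (Ak - μ)) * X ^ h with hq'def
  have hfac : q = Polynomial.C ((X : K[X]) ^ μ) * q' := by
    have h1 : (Polynomial.C (C a * X ^ (μ + (Ai - μ)) + C b * X ^ (μ + (Aj - μ))) +
        Polynomial.C (C c * X ^ (μ + (Ak - μ))) * X ^ h : (K[X])[X]) =
        Polynomial.C ((X : K[X]) ^ μ) * q' := by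
      rw [hq'def]
      simp only [pow_add, Polynomial.C_mul, Polynomial.C_add]
      ring
    rw [show μ + (Ai - μ) = Ai from by omega, show μ + (Aj - μ) = Aj from by omega,
      show μ + (Ak - μ) = Ak from by omega] at h1
    rw [hqdef, hn1, hn2]
    exact h1
  have hirr : Irreducible q' := by
    rw [hq'def]
    exact eisenstein_core a b c ha hb hc (Ai - μ) (Aj - μ) (Ak - μ) h (by omega) (by omega) hh
      (by rw [show Aj - μ - (Ai - μ) = Aj - Ai from by omega]; exact hgK)
  have hq'prime : Prime q' := hirr.prime
  have hq'ne : q' ≠ 0 := hq'prime.ne_zero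
  have hCX : Prime (Polynomial.C (X : K[X]) : (K[X])[X]) := Polynomial.prime_C_iff.mpr prime_X
  -- a divisor of (C X)^μ is a monomial
  have hkey2 : ∀ r : (K[X])[X], r ∣ (Polynomial.C (X : K[X])) ^ μ →
      ∃ (e : K) (γ : ℕ), r = Polynomial.C (C e * X ^ γ) := by
    intro r hr
    obtain ⟨i, hi, hassoc⟩ := (dvd_prime_pow hCX μ).mp hr
    obtain ⟨u, hu⟩ := hassoc.symm
    obtain ⟨b₀, hb₀u, hb₀⟩ := Polynomial.isUnit_iff.mp u.isUnit
    obtain ⟨e, heu, he⟩ := Polynomial.isUnit_iff.mp hb₀u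
    refine ⟨e, i, ?_⟩
    rw [← hu, ← hb₀, ← he, ← Polynomial.C_pow, ← Polynomial.C_mul, mul_comm]
  have hdvd : q' ∣ r₁ * r₂ := by
    rw [hrr, hfac]
    exact Dvd.dvd.mul_left dvd_rfl _
  have habs : ∀ (rA rB : (K[X])[X]), r₁ * r₂ = rA * rB → q' ∣ rA →
      ∃ (e : K) (γ : ℕ), rB = Polynomial.C (C e * X ^ γ) := by
    intro rA rB hAB hqA
    obtain ⟨w, hw⟩ := hqA
    apply hkey2
    refine ⟨w, ?_⟩
    apply mul_left_cancel₀ hq'ne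
    calc q' * Polynomial.C (X : K[X]) ^ μ = Polynomial.C ((X : K[X]) ^ μ) * q' := by
          rw [← Polynomial.C_pow]; ring
    _ = r₁ * r₂ := (hrr.trans hfac).symm
    _ = rA * rB := hAB
    _ = q' * (rB * w) := by rw [hw]; ring
  have finish : ∀ (AA : LaurentPolynomial (Polynomial K)) (NN : ℕ) (dd : ℕ) (rr : (K[X])[X])
      (e : K) (γ : ℕ), toLaurent (X ^ dd * rr) = AA * LaurentPolynomial.T (NN : ℤ) →
      rr = Polynomial.C (C e * X ^ γ) →
      ∃ (e' : K) (γ' : ℕ) (z : ℤ), AA = LaurentPolynomial.C (C e' * X ^ γ') *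
        LaurentPolynomial.T z := by
    intro AA NN dd rr e γ hAA hrr'
    refine ⟨e, γ, (dd : ℤ) - NN, ?_⟩
    have : AA = toLaurent (X ^ dd * rr) * LaurentPolynomial.T (-(NN:ℤ)) := by
      rw [hAA, LaurentPolynomial.mul_T_assoc, add_neg_cancel, LaurentPolynomial.T_zero, mul_one]
    rw [this, hrr', map_mul, Polynomial.toLaurent_X_pow, Polynomial.toLaurent_C]
    rw [mul_comm (LaurentPolynomial.T (dd : ℤ)) _, LaurentPolynomial.mul_T_assoc, sub_eq_add_neg]
  rcases hq'prime.2.2 _ _ hdvd with hq1 | hq2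
  · obtain ⟨e, γ, hform⟩ := habs r₁ r₂ rfl hq1
    right
    exact finish A₂ N₂ d₂ r₂ e γ (by rw [← hd₂]; exact hp₂) hform
  · obtain ⟨e, γ, hform⟩ := habs r₂ r₁ (mul_comm r₁ r₂) hq2
    left
    exact finish A₁ N₁ d₁ r₁ e γ (by rw [← hd₁]; exact hp₁) hform
noncomputable def Phi {K : Type*} [Field K] {n : ℕ} (s : Fin n → ℕ) (r : Fin n → ℤ) :
    MvPolynomial (Fin n) K →+* LaurentPolynomial (Polynomial K) :=
  MvPolynomial.eval₂Hom ((LaurentPolynomial.C).comp Polynomial.C)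
    (fun t => LaurentPolynomial.C ((Polynomial.X : Polynomial K) ^ s t) *
      LaurentPolynomial.T (r t))

def sdot {n : ℕ} (s : Fin n → ℕ) (m : Fin n →₀ ℕ) : ℕ := ∑ t, s t * m t

def rdot {n : ℕ} (r : Fin n → ℤ) (m : Fin n →₀ ℕ) : ℤ := ∑ t, r t * (m t : ℤ)

lemma prod_T {R : Type*} [CommSemiring R] {ι : Type*} (s : Finset ι) (f : ι → ℤ) :
    (∏ t ∈ s, LaurentPolynomial.T (f t) : LaurentPolynomial R) =
      LaurentPolynomial.T (∑ t ∈ s, f t) := by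
  induction s using Finset.cons_induction with
  | empty => simp
  | cons a s ha ih => rw [Finset.prod_cons, Finset.sum_cons, ih, LaurentPolynomial.T_add]

open Polynomial in
lemma Phi_monomial {K : Type*} [Field K] {n : ℕ} (s : Fin n → ℕ) (r : Fin n → ℤ)
    (m : Fin n →₀ ℕ) (e : K) :
    Phi s r (MvPolynomial.monomial m e) =
      LaurentPolynomial.C (C e * X ^ sdot s m) * LaurentPolynomial.T (rdot r m) := by
  rw [Phi, MvPolynomial.eval₂Hom_monomial]
  rw [Finsupp.prod_fintype _ _ (fun t => pow_zero _)]
  have hterm : ∀ t : Fin n, (LaurentPolynomial.C ((X : K[X]) ^ s t) *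
      LaurentPolynomial.T (r t)) ^ m t =
      LaurentPolynomial.C ((X : K[X]) ^ (s t * m t)) * LaurentPolynomial.T (r t * (m t : ℤ)) := by
    intro t
    rw [mul_pow, ← map_pow, ← pow_mul, LaurentPolynomial.T_pow, mul_comm (r t)]
  rw [Finset.prod_congr rfl (fun t _ => hterm t), Finset.prod_mul_distrib, ← map_prod,
    Finset.prod_pow_eq_pow_sum, prod_T]
  rw [RingHom.comp_apply, ← mul_assoc, ← map_mul]
  rfl
open Polynomial in
lemma Phi_sum {K : Type*} [Field K] {n : ℕ} (s : Fin n → ℕ) (r : Fin n → ℤ)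
    (F : MvPolynomial (Fin n) K) :
    Phi s r F = ∑ m ∈ F.support,
      LaurentPolynomial.C (C (MvPolynomial.coeff m F) * X ^ sdot s m) *
        LaurentPolynomial.T (rdot r m) := by
  conv_lhs => rw [← MvPolynomial.support_sum_monomial_coeff F]
  rw [map_sum]
  exact Finset.sum_congr rfl fun m _ => Phi_monomial s r m _

open Polynomial in
lemma no_monomial_image {K : Type*} [Field K] {n : ℕ} (s : Fin n → ℕ) (r : Fin n → ℤ)
    (F : MvPolynomial (Fin n) K) (m₁ m₂ : Fin n →₀ ℕ)
    (h₁ : m₁ ∈ F.support) (h₂ : m₂ ∈ F.support) (hne : m₁ ≠ m₂)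
    (hinj : ∀ m ∈ F.support, ∀ m' ∈ F.support,
      sdot s m = sdot s m' → rdot r m = rdot r m' → m = m')
    (e : K) (γ : ℕ) (z : ℤ)
    (heq : Phi s r F = LaurentPolynomial.C (C e * X ^ γ) * LaurentPolynomial.T z) :
    False := by
  classical
  set N : ℤ := (∑ m ∈ F.support, |rdot r m|) + |z| with hN
  have habs : ∀ m ∈ F.support, |rdot r m| ≤ ∑ m ∈ F.support, |rdot r m| :=
    fun m hm => Finset.single_le_sum (f := fun m => |rdot r m|) (fun _ _ => abs_nonneg _) hm
  have hsum0 : (0:ℤ) ≤ ∑ m ∈ F.support, |rdot r m| :=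
    Finset.sum_nonneg fun _ _ => abs_nonneg _
  have hNm : ∀ m ∈ F.support, 0 ≤ rdot r m + N := by
    intro m hm
    have h1 := habs m hm
    have h2 := neg_abs_le (rdot r m)
    have h3 := abs_nonneg z
    omega
  have hNz : 0 ≤ z + N := by
    have := neg_abs_le z
    omega
  have hpoly : (∑ m ∈ F.support, Polynomial.C (C (MvPolynomial.coeff m F) * X ^ sdot s m) *
      X ^ (rdot r m + N).toNat : (K[X])[X]) =
      Polynomial.C (C e * X ^ γ) * X ^ (z + N).toNat := by
    apply Polynomial.toLaurent_injective
    rw [map_sum, map_mul, Polynomial.toLaurent_C, Polynomial.toLaurent_X_pow,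
      Int.toNat_of_nonneg hNz]
    have hL : ∀ m ∈ F.support,
        toLaurent (Polynomial.C (C (MvPolynomial.coeff m F) * X ^ sdot s m) *
          X ^ (rdot r m + N).toNat) =
        LaurentPolynomial.C (C (MvPolynomial.coeff m F) * X ^ sdot s m) *
          LaurentPolynomial.T (rdot r m) * LaurentPolynomial.T N := by
      intro m hm
      rw [map_mul, Polynomial.toLaurent_C, Polynomial.toLaurent_X_pow,
        Int.toNat_of_nonneg (hNm m hm), LaurentPolynomial.mul_T_assoc]
    rw [Finset.sum_congr rfl hL, ← Finset.sum_mul, ← Phi_sum s r F, heq,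
      LaurentPolynomial.mul_T_assoc]
  have claim : ∀ m0 ∈ F.support, sdot s m0 = γ ∧ rdot r m0 = z := by
    intro m0 hm0
    have hc := congrArg
      (fun W : (K[X])[X] => (W.coeff ((rdot r m0 + N).toNat)).coeff (sdot s m0)) hpoly
    simp only [Polynomial.finset_sum_coeff, Polynomial.coeff_C_mul, Polynomial.coeff_X_pow,
      mul_ite, mul_one, mul_zero, apply_ite (fun p : K[X] => p.coeff (sdot s m0)),
      Polynomial.coeff_zero, Polynomial.coeff_C_mul, Polynomial.coeff_X_pow] at hc
    rw [Finset.sum_eq_single_of_mem m0 hm0] at hc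
    · rw [if_pos rfl, if_pos rfl] at hc
      by_cases hcond : ((rdot r m0 + N).toNat = (z + N).toNat)
      · rw [if_pos hcond] at hc
        by_cases hcond2 : sdot s m0 = γ
        · refine ⟨hcond2, ?_⟩
          have : rdot r m0 + N = z + N := by
            rw [← Int.toNat_of_nonneg (hNm m0 hm0), ← Int.toNat_of_nonneg hNz, hcond]
          omega
        · rw [if_neg hcond2] at hc
          exact absurd hc (MvPolynomial.mem_support_iff.mp hm0)
      · rw [if_neg hcond] at hc
        exact absurd hc (MvPolynomial.mem_support_iff.mp hm0)
    · intro m hm hmne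
      by_cases hc1 : ((rdot r m0 + N).toNat = (rdot r m + N).toNat)
      · by_cases hc2 : sdot s m0 = sdot s m
        · exfalso
          apply hmne
          apply hinj m hm m0 hm0 hc2.symm
          have : rdot r m + N = rdot r m0 + N := by
            rw [← Int.toNat_of_nonneg (hNm m hm), ← Int.toNat_of_nonneg (hNm m0 hm0), hc1]
          omega
        · rw [if_pos hc1, if_neg hc2]
      · rw [if_neg hc1]
  obtain ⟨hs1, hr1⟩ := claim m₁ h₁
  obtain ⟨hs2, hr2⟩ := claim m₂ h₂
  exact hne (hinj m₁ h₁ m₂ h₂ (hs1.trans hs2.symm) (hr1.trans hr2.symm))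
open Polynomial in
lemma key_lemma {K : Type*} [Field K] [IsAlgClosed K] {n : ℕ}
    (i j k : Fin n →₀ ℕ) (a b c : K) (ha : a ≠ 0) (hb : b ≠ 0) (hc : c ≠ 0)
    (F G : MvPolynomial (Fin n) K)
    (hFG : MvPolynomial.monomial i a + MvPolynomial.monomial j b +
      MvPolynomial.monomial k c = F * G)
    (m₁F m₂F : Fin n →₀ ℕ) (hm₁F : m₁F ∈ F.support) (hm₂F : m₂F ∈ F.support) (hneF : m₁F ≠ m₂F)
    (m₁G m₂G : Fin n →₀ ℕ) (hm₁G : m₁G ∈ G.support) (hm₂G : m₂G ∈ G.support) (hneG : m₁G ≠ m₂G)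
    (s : Fin n → ℕ) (r : Fin n → ℤ)
    (hinj : ∀ m ∈ F.support ∪ G.support, ∀ m' ∈ F.support ∪ G.support,
      sdot s m = sdot s m' → rdot r m = rdot r m' → m = m')
    (hsij : sdot s i < sdot s j)
    (hrij : rdot r i = rdot r j)
    (hrik : rdot r i < rdot r k)
    (hgK : ((sdot s j - sdot s i : ℕ) : K) ≠ 0) : False := by
  classical
  set β : ℤ := rdot r i with hβ
  set h : ℕ := (rdot r k - rdot r i).toNat with hh
  have hh1 : 1 ≤ h := by omega
  have hhcast : (h : ℤ) = rdot r k - β := by omega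
  set q : (K[X])[X] := Polynomial.C (C a * X ^ sdot s i + C b * X ^ sdot s j) +
    Polynomial.C (C c * X ^ sdot s k) * X ^ h with hq
  have hTL : toLaurent q = LaurentPolynomial.C (C a * X ^ sdot s i + C b * X ^ sdot s j) +
      LaurentPolynomial.C (C c * X ^ sdot s k) * LaurentPolynomial.T (h : ℤ) := by
    rw [hq, map_add, map_mul, Polynomial.toLaurent_C, Polynomial.toLaurent_C,
      Polynomial.toLaurent_X_pow]
  have hβh : β + (h : ℤ) = rdot r k := by omega
  have hPhiP : Phi s r (MvPolynomial.monomial i a + MvPolynomial.monomial j b +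
      MvPolynomial.monomial k c) = LaurentPolynomial.T β * toLaurent q := by
    rw [map_add, map_add, Phi_monomial, Phi_monomial, Phi_monomial, hTL]
    rw [map_add, mul_add, mul_add, ← mul_assoc (LaurentPolynomial.T β)]
    rw [mul_comm (LaurentPolynomial.T β) (LaurentPolynomial.C (C a * X ^ sdot s i)),
        mul_comm (LaurentPolynomial.T β) (LaurentPolynomial.C (C b * X ^ sdot s j)),
        mul_comm (LaurentPolynomial.T β) (LaurentPolynomial.C (C c * X ^ sdot s k))]
    rw [mul_assoc (LaurentPolynomial.C (C c * X ^ sdot s k)), ← LaurentPolynomial.T_add, hβh,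
      ← hrij]
  have hA : (LaurentPolynomial.T (-β) * Phi s r F) * Phi s r G = toLaurent q := by
    rw [mul_assoc, ← map_mul, ← hFG, hPhiP, ← mul_assoc, ← LaurentPolynomial.T_add,
      neg_add_cancel, LaurentPolynomial.T_zero, one_mul]
  have hinjF : ∀ m ∈ F.support, ∀ m' ∈ F.support,
      sdot s m = sdot s m' → rdot r m = rdot r m' → m = m' := fun m hm m' hm' =>
    hinj m (Finset.mem_union_left _ hm) m' (Finset.mem_union_left _ hm')
  have hinjG : ∀ m ∈ G.support, ∀ m' ∈ G.support,
      sdot s m = sdot s m' → rdot r m = rdot r m' → m = m' := fun m hm m' hm' =>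
    hinj m (Finset.mem_union_right _ hm) m' (Finset.mem_union_right _ hm')
  rcases laurent_factor a b c ha hb hc (sdot s i) (sdot s j) (sdot s k) h hsij hh1 hgK
    (LaurentPolynomial.T (-β) * Phi s r F) (Phi s r G) hA with ⟨e, γ, z, hform⟩ | ⟨e, γ, z, hform⟩
  · apply no_monomial_image s r F m₁F m₂F hm₁F hm₂F hneF hinjF e γ (β + z)
    have : Phi s r F = LaurentPolynomial.T β * (LaurentPolynomial.T (-β) * Phi s r F) := by
      rw [← mul_assoc, ← LaurentPolynomial.T_add, add_neg_cancel, LaurentPolynomial.T_zero,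
        one_mul]
    rw [this, hform, mul_comm (LaurentPolynomial.T β) _, LaurentPolynomial.mul_T_assoc,
      add_comm]
  · exact no_monomial_image s r G m₁G m₂G hm₁G hm₂G hneG hinjG e γ z hform
lemma sdot_sub {n : ℕ} (s : Fin n → ℕ) (m₁ m₂ : Fin n →₀ ℕ) :
    (sdot s m₁ : ℤ) - sdot s m₂ = ∑ t, (s t : ℤ) * ((m₁ t : ℤ) - m₂ t) := by
  rw [sdot, sdot]
  push_cast
  rw [← Finset.sum_sub_distrib]
  exact Finset.sum_congr rfl fun t _ => by ring

lemma rdot_sub {n : ℕ} (r : Fin n → ℤ) (m₁ m₂ : Fin n →₀ ℕ) :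
    rdot r m₁ - rdot r m₂ = ∑ t, r t * ((m₁ t : ℤ) - m₂ t) := by
  rw [rdot, rdot, ← Finset.sum_sub_distrib]
  exact Finset.sum_congr rfl fun t _ => by ring

open Polynomial in
lemma choose_s {n : ℕ} (Δ : Finset (Fin n → ℤ)) (h0 : ∀ δ ∈ Δ, δ ≠ 0)
    (p : ℕ) (hp : 2 ≤ p) (w : Fin n → ℤ) (t₁ : Fin n) (hw : ¬ (p:ℤ) ∣ w t₁) :
    ∃ s : Fin n → ℕ, (∀ δ ∈ Δ, ∑ t, (s t : ℤ) * δ t ≠ 0) ∧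
      ¬ (p:ℤ) ∣ ∑ t, (s t : ℤ) * w t := by
  classical
  set Fp : (Fin n → ℤ) → Polynomial ℤ := fun δ =>
    Polynomial.C (δ t₁) + Polynomial.C (p:ℤ) * ∑ t, Polynomial.C (δ t) * X ^ ((t:ℕ)+1) with hFp
  have hFpne : ∀ δ ∈ Δ, Fp δ ≠ 0 := by
    intro δ hδ hzero
    obtain ⟨t₂, ht₂⟩ := Function.ne_iff.mp (h0 δ hδ)
    have hcoeff := congrArg (fun q => Polynomial.coeff q ((t₂:ℕ)+1)) hzero
    simp only [hFp, Polynomial.coeff_add, Polynomial.coeff_C, Polynomial.coeff_C_mul,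
      Polynomial.finset_sum_coeff, Polynomial.coeff_X_pow, mul_ite, mul_one, mul_zero,
      Polynomial.coeff_zero] at hcoeff
    rw [if_neg (by omega : ¬ (t₂:ℕ)+1 = 0)] at hcoeff
    rw [Finset.sum_eq_single_of_mem t₂ (Finset.mem_univ t₂)] at hcoeff
    · rw [if_pos rfl, zero_add] at hcoeff
      have hpz : (p:ℤ) ≠ 0 := by positivity
      exact ht₂ ((mul_eq_zero.mp hcoeff).resolve_left hpz)
    · intro t _ htne
      rw [if_neg]
      intro hEq
      exact htne (Fin.ext (by omega))
  have hfin : (⋃ δ ∈ (↑Δ : Set (Fin n → ℤ)), {x : ℤ | (Fp δ).IsRoot x}).Finite :=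
    Set.Finite.biUnion Δ.finite_toSet fun δ hδ => Polynomial.finite_setOf_isRoot (hFpne δ hδ)
  have hpre : {M : ℕ |
      ((M:ℤ) ∈ ⋃ δ ∈ (↑Δ : Set (Fin n → ℤ)), {x : ℤ | (Fp δ).IsRoot x})}.Finite := by
    apply Set.Finite.preimage _ hfin
    exact Function.Injective.injOn (fun x y h => by exact_mod_cast h)
  obtain ⟨M, hM⟩ := (Set.Finite.infinite_compl hpre).nonempty
  simp only [Set.mem_compl_iff, Set.mem_setOf_eq, Set.mem_iUnion] at hM
  push_neg at hM
  set s : Fin n → ℕ := fun t => (if t = t₁ then 1 else 0) + p * M ^ ((t:ℕ)+1) with hs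
  have hcast : ∀ t, ((s t : ℤ)) = (if t = t₁ then (1:ℤ) else 0) + (p:ℤ) * (M:ℤ) ^ ((t:ℕ)+1) := by
    intro t
    by_cases ht : t = t₁ <;> simp [hs, ht] <;> push_cast <;> ring
  have hsum : ∀ δ : Fin n → ℤ,
      ∑ t, (s t : ℤ) * δ t = δ t₁ + (p:ℤ) * ∑ t, δ t * (M:ℤ)^((t:ℕ)+1) := by
    intro δ
    have h1 : ∑ t, (s t : ℤ) * δ t =
        ∑ t, ((if t = t₁ then (1:ℤ) else 0) * δ t + (p:ℤ) * (δ t * (M:ℤ)^((t:ℕ)+1))) :=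
      Finset.sum_congr rfl fun t _ => by rw [hcast t]; ring
    rw [h1, Finset.sum_add_distrib, ← Finset.mul_sum]
    congr 1
    simp [ite_mul]
  have heval : ∀ δ : Fin n → ℤ,
      (Fp δ).eval (M:ℤ) = δ t₁ + (p:ℤ) * ∑ t, δ t * (M:ℤ)^((t:ℕ)+1) := by
    intro δ
    simp [hFp, Polynomial.eval_finset_sum]
  refine ⟨s, ?_, ?_⟩
  · intro δ hδ hzero
    apply hM δ hδ
    rw [Polynomial.IsRoot, heval δ, ← hsum δ]
    exact hzero
  · intro hdvd
    apply hw
    have h3 : w t₁ = (∑ t, (s t : ℤ) * w t) - (p:ℤ) * ∑ t, w t * (M:ℤ)^((t:ℕ)+1) := by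
      rw [hsum w]; ring
    rw [h3]
    exact dvd_sub hdvd ⟨_, rfl⟩
lemma indep_of_not_collinear {n : ℕ} {i j k : Fin n →₀ ℕ}
    (hcol : ¬ Collinear ℝ
      ({fun t => (i t : ℝ), fun t => (j t : ℝ), fun t => (k t : ℝ)} : Set (Fin n → ℝ))) :
    ∀ α β : ℤ, (∀ t, α * ((j t : ℤ) - i t) + β * ((k t : ℤ) - i t) = 0) → α = 0 ∧ β = 0 := by
  intro α β hrel
  by_contra hcon
  apply hcol
  have hrelR : ∀ t, (α:ℝ) * ((j t : ℝ) - i t) + (β:ℝ) * ((k t : ℝ) - i t) = 0 := by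
    intro t
    have := hrel t
    have h2 : ((α * ((j t : ℤ) - i t) + β * ((k t : ℤ) - i t) : ℤ) : ℝ) = 0 := by
      rw [this]; norm_num
    push_cast at h2
    linarith
  by_cases hβ : β = 0
  · -- then α ≠ 0 and j = i
    have hα : α ≠ 0 := by tauto
    have hji : (fun t => (j t : ℝ)) = (fun t => (i t : ℝ)) := by
      funext t
      have := hrelR t
      rw [hβ] at this
      push_cast at this
      have hαR : (α:ℝ) ≠ 0 := Int.cast_ne_zero.mpr hα
      have : (j t : ℝ) - i t = 0 := by
        rcases mul_eq_zero.mp (by linarith : (α:ℝ) * ((j t : ℝ) - i t) = 0) with h | h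
        · exact absurd h hαR
        · exact h
      linarith
    rw [Set.insert_comm, hji, Set.insert_comm, Set.insert_idem]
    exact collinear_pair ℝ _ _
  · -- k - i = (-α/β) (j - i) : all three on the line through i with direction j - i
    rw [collinear_iff_exists_forall_eq_smul_vadd]
    refine ⟨fun t => (i t : ℝ), fun t => (j t : ℝ) - i t, ?_⟩
    intro pt hpt
    rcases hpt with h | h | h
    · exact ⟨0, by rw [h]; funext t; simp⟩
    · refine ⟨1, by rw [h]; funext t; simp⟩
    · refine ⟨-(α:ℝ)/β, ?_⟩
      rw [h]
      funext t
      have := hrelR t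
      have hβR : (β:ℝ) ≠ 0 := Int.cast_ne_zero.mpr hβ
      show (k t : ℝ) = (-(α:ℝ)/β) * ((j t : ℝ) - i t) + (i t : ℝ)
      field_simp
      ring_nf
      nlinarith [hrelR t]

lemma gram {n : ℕ} (u v : Fin n → ℤ)
    (hind : ∀ α β : ℤ, (∀ t, α * u t + β * v t = 0) → α = 0 ∧ β = 0) :
    ∃ r : Fin n → ℤ, (∑ t, r t * u t = 0) ∧ 0 < ∑ t, r t * v t := by
  set dU : ℤ := ∑ t, u t * u t with hdU
  set dUV : ℤ := ∑ t, u t * v t with hdUV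
  set r : Fin n → ℤ := fun t => dU * v t - dUV * u t with hr
  have hune : ∃ t, u t ≠ 0 := by
    by_contra hz
    push_neg at hz
    have := (hind 1 0 (fun t => by rw [hz t]; ring)).1
    norm_num at this
  have hdUpos : 0 < dU := by
    obtain ⟨t₀, ht₀⟩ := hune
    apply Finset.sum_pos' (fun t _ => mul_self_nonneg (u t))
    exact ⟨t₀, Finset.mem_univ t₀, mul_self_pos.mpr ht₀⟩
  have hru : ∑ t, r t * u t = 0 := by
    have h1 : ∑ t, r t * u t = dU * (∑ t, u t * v t) - dUV * (∑ t, u t * u t) := by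
      rw [Finset.mul_sum, Finset.mul_sum, ← Finset.sum_sub_distrib]
      exact Finset.sum_congr rfl fun t _ => by rw [hr]; ring
    rw [h1, ← hdUV, ← hdU]
    ring
  have hrr : ∑ t, r t * r t = dU * ∑ t, r t * v t - dUV * ∑ t, r t * u t := by
    rw [Finset.mul_sum, Finset.mul_sum, ← Finset.sum_sub_distrib]
    refine Finset.sum_congr rfl fun t _ => ?_
    nth_rewrite 2 [hr]
    ring
  have hrne : ∃ t, r t ≠ 0 := by
    by_contra hz
    push_neg at hz
    have h2 : ∀ t, -dUV * u t + dU * v t = 0 := by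
      intro t
      have h3 : dU * v t - dUV * u t = 0 := hz t
      linarith
    have := (hind (-dUV) dU h2).2
    omega
  have hrrpos : 0 < ∑ t, r t * r t := by
    obtain ⟨t₀, ht₀⟩ := hrne
    apply Finset.sum_pos' (fun t _ => mul_self_nonneg (r t))
    exact ⟨t₀, Finset.mem_univ t₀, mul_self_pos.mpr ht₀⟩
  refine ⟨r, hru, ?_⟩
  rw [hru, mul_zero, sub_zero] at hrr
  by_contra hle
  push_neg at hle
  have : dU * ∑ t, r t * v t ≤ 0 := mul_nonpos_of_nonneg_of_nonpos (le_of_lt hdUpos) hle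
  omega
noncomputable def Psi {K : Type*} [Field K] {n : ℕ} (s : Fin n → ℕ) :
    MvPolynomial (Fin n) K →+* Polynomial K :=
  MvPolynomial.eval₂Hom (Polynomial.C) (fun t => Polynomial.X ^ s t)

open Polynomial in
lemma Psi_monomial {K : Type*} [Field K] {n : ℕ} (s : Fin n → ℕ) (m : Fin n →₀ ℕ) (e : K) :
    Psi s (MvPolynomial.monomial m e) = C e * X ^ sdot s m := by
  rw [Psi, MvPolynomial.eval₂Hom_monomial]
  rw [Finsupp.prod_fintype _ _ (fun t => pow_zero _)]
  have hterm : ∀ t : Fin n, ((X : K[X]) ^ s t) ^ m t = X ^ (s t * m t) := fun t => by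
    rw [← pow_mul]
  rw [Finset.prod_congr rfl (fun t _ => hterm t), Finset.prod_pow_eq_pow_sum]
  rfl

open Polynomial in
lemma not_unit_tri {K : Type*} [Field K] {n : ℕ} (i j k : Fin n →₀ ℕ) (a b c : K)
    (ha : a ≠ 0) (hb : b ≠ 0) (s : Fin n → ℕ)
    (hsij : sdot s i ≠ sdot s j) (hsik : sdot s i ≠ sdot s k) (hsjk : sdot s j ≠ sdot s k) :
    ¬ IsUnit (MvPolynomial.monomial i a + MvPolynomial.monomial j b +
      MvPolynomial.monomial k c) := by
  intro hu
  have hu2 := hu.map (Psi s)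
  rw [map_add, map_add, Psi_monomial, Psi_monomial, Psi_monomial] at hu2
  obtain ⟨u, hun, hCu⟩ := Polynomial.isUnit_iff.mp hu2
  have hcz : ∀ z : ℕ, (C u).coeff z = (C a * X ^ sdot s i + C b * X ^ sdot s j +
      C c * X ^ sdot s k).coeff z := by
    intro z; rw [hCu]
  have h1 := hcz (sdot s i)
  have h2 := hcz (sdot s j)
  simp only [coeff_C, coeff_add, coeff_C_mul, coeff_X_pow, mul_ite, mul_one, mul_zero,
    eq_self_iff_true, if_true] at h1 h2
  rw [if_neg (fun hh : sdot s i = sdot s j => hsij hh),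
    if_neg (fun hh : sdot s i = sdot s k => hsik hh)] at h1
  rw [if_neg (fun hh : sdot s j = sdot s i => hsij hh.symm),
    if_neg (fun hh : sdot s j = sdot s k => hsjk hh)] at h2
  simp only [add_zero, zero_add] at h1 h2
  have hz1 : sdot s i = 0 := by
    by_contra hne
    rw [if_neg hne] at h1
    exact ha h1.symm
  have hz2 : sdot s j = 0 := by
    by_contra hne
    rw [if_neg hne] at h2
    exact hb h2.symm
  exact hsij (hz1.trans hz2.symm)

lemma two_terms {K : Type*} [Field K] {n : ℕ} (i j k : Fin n →₀ ℕ) (a b c : K)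
    (ha : a ≠ 0) (hb : b ≠ 0) (hc : c ≠ 0)
    (hij : i ≠ j) (hik : i ≠ k) (hjk : j ≠ k)
    (hinf : ∀ t, min (i t) (min (j t) (k t)) = 0)
    (F G : MvPolynomial (Fin n) K)
    (hFG : MvPolynomial.monomial i a + MvPolynomial.monomial j b +
      MvPolynomial.monomial k c = F * G)
    (hFu : ¬ IsUnit F) (hF0 : F ≠ 0) :
    ∃ m₁ ∈ F.support, ∃ m₂ ∈ F.support, m₁ ≠ m₂ := by
  classical
  by_contra hcon
  push_neg at hcon
  obtain ⟨v, hv⟩ := MvPolynomial.support_nonempty.mpr hF0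
  have hvne : MvPolynomial.coeff v F ≠ 0 := MvPolynomial.mem_support_iff.mp hv
  have hFmono : F = MvPolynomial.monomial v (MvPolynomial.coeff v F) := by
    apply MvPolynomial.ext
    intro m
    rw [MvPolynomial.coeff_monomial]
    by_cases hm : m ∈ F.support
    · rw [if_pos (hcon v hv m hm).symm.symm]
      rw [hcon m hm v hv]
    · rw [MvPolynomial.notMem_support_iff.mp hm, if_neg]
      intro hvm
      rw [← hvm] at hm
      exact hm hv
  -- every exponent of P is ≥ v
  have hsub : ∀ m0 : Fin n →₀ ℕ, MvPolynomial.coeff m0 (F * G) ≠ 0 → ∀ t, v t ≤ m0 t := by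
    intro m0 hm0 t
    have hm0' : m0 ∈ (F * G).support := MvPolynomial.mem_support_iff.mpr hm0
    have := MvPolynomial.support_mul F G hm0'
    rw [Finset.mem_add] at this
    obtain ⟨mf, hmf, mg, hmg, hsum⟩ := this
    have hmfv : mf = v := hcon mf hmf v hv
    rw [← hsum, hmfv, Finsupp.add_apply]
    omega
  have hcP : ∀ (m0 : Fin n →₀ ℕ), MvPolynomial.coeff m0 (MvPolynomial.monomial i a +
      MvPolynomial.monomial j b + MvPolynomial.monomial k c) =
      (if i = m0 then a else 0) + (if j = m0 then b else 0) + (if k = m0 then c else 0) := by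
    intro m0
    rw [MvPolynomial.coeff_add, MvPolynomial.coeff_add, MvPolynomial.coeff_monomial,
      MvPolynomial.coeff_monomial, MvPolynomial.coeff_monomial]
  have hvi : ∀ t, v t ≤ i t := by
    apply hsub i
    rw [← hFG, hcP, if_pos rfl, if_neg (fun hh => hij hh.symm), if_neg (fun hh => hik hh.symm)]
    simpa using ha
  have hvj : ∀ t, v t ≤ j t := by
    apply hsub j
    rw [← hFG, hcP, if_neg (fun hh => hij hh), if_pos rfl, if_neg (fun hh => hjk hh.symm)]
    simpa using hb
  have hvk : ∀ t, v t ≤ k t := by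
    apply hsub k
    rw [← hFG, hcP, if_neg (fun hh => hik hh), if_neg (fun hh => hjk hh), if_pos rfl]
    simpa using hc
  have hv0 : v = 0 := by
    ext t
    have h1 := hvi t
    have h2 := hvj t
    have h3 := hvk t
    have h4 := hinf t
    simp only [Finsupp.coe_zero, Pi.zero_apply]
    omega
  apply hFu
  rw [hv0] at hvne
  rw [hFmono, hv0, ← MvPolynomial.C_apply]
  exact (Ne.isUnit hvne).map (MvPolynomial.C : K →+* MvPolynomial (Fin n) K)

lemma coeff_tri {K : Type*} [Field K] {n : ℕ} (i j k : Fin n →₀ ℕ) (a b c : K)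
    (m0 : Fin n →₀ ℕ) :
    MvPolynomial.coeff m0 (MvPolynomial.monomial i a + MvPolynomial.monomial j b +
      MvPolynomial.monomial k c) =
      (if i = m0 then a else 0) + (if j = m0 then b else 0) + (if k = m0 then c else 0) := by
  rw [MvPolynomial.coeff_add, MvPolynomial.coeff_add, MvPolynomial.coeff_monomial,
    MvPolynomial.coeff_monomial, MvPolynomial.coeff_monomial]
theorem stmt16 {K : Type*} [Field K] [IsAlgClosed K] (n : ℕ) (i j k : Fin n →₀ ℕ)
    (hcol : ¬ Collinear ℝ
      ({fun t => (i t : ℝ), fun t => (j t : ℝ), fun t => (k t : ℝ)} : Set (Fin n → ℝ)))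
    (hinf : ∀ t, min (i t) (min (j t) (k t)) = 0)
    (hchar : ¬ ∃ p : ℕ, p.Prime ∧ CharP K p ∧
      (∀ t, p ∣ i t) ∧ (∀ t, p ∣ j t) ∧ (∀ t, p ∣ k t)) :
    ∀ a b c : K, a ≠ 0 → b ≠ 0 → c ≠ 0 →
      Irreducible (MvPolynomial.monomial i a + MvPolynomial.monomial j b +
        MvPolynomial.monomial k c) := by
  intro a b c ha hb hc
  classical
  have hind := indep_of_not_collinear hcol
  have hij : i ≠ j := fun h => absurd (hind 1 0 (fun t => by rw [h]; ring)).1 one_ne_zero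
  have hik : i ≠ k := fun h => absurd (hind 0 1 (fun t => by rw [h]; ring)).2 one_ne_zero
  have hjk : j ≠ k := fun h => absurd (hind 1 (-1) (fun t => by rw [h]; ring)).1 one_ne_zero
  obtain ⟨t₀, ht₀⟩ : ∃ t, (j t : ℤ) - i t ≠ 0 := by
    by_contra hz
    push_neg at hz
    apply hij
    ext t
    have h2 := sub_eq_zero.mp (hz t)
    exact_mod_cast h2.symm
  obtain ⟨tv, htv⟩ : ∃ t, (k t : ℤ) - i t ≠ 0 := by
    by_contra hz
    push_neg at hz
    apply hik
    ext t
    have h2 := sub_eq_zero.mp (hz t)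
    exact_mod_cast h2.symm
  obtain ⟨tw, htw⟩ : ∃ t, (k t : ℤ) - j t ≠ 0 := by
    by_contra hz
    push_neg at hz
    apply hjk
    ext t
    have h2 := sub_eq_zero.mp (hz t)
    exact_mod_cast h2.symm
  obtain ⟨p₀, hp₀2, hp₀nd⟩ : ∃ p₀ : ℕ, 2 ≤ p₀ ∧ ¬ (p₀:ℤ) ∣ ((j t₀ : ℤ) - i t₀) := by
    refine ⟨((j t₀ : ℤ) - i t₀).natAbs + 2, by omega, ?_⟩
    intro hd
    have h2 : ((((j t₀ : ℤ) - i t₀).natAbs + 2 : ℕ) : ℤ) ∣ |((j t₀ : ℤ) - i t₀)| :=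
      (dvd_abs _ _).mpr hd
    have h3 := Int.le_of_dvd (abs_pos.mpr ht₀) h2
    have h4 : |((j t₀ : ℤ) - i t₀)| = (((j t₀ : ℤ) - i t₀).natAbs : ℤ) := Int.abs_eq_natAbs _
    omega
  constructor
  · -- P is not a unit
    set Δ0 : Finset (Fin n → ℤ) := {fun t => (j t : ℤ) - i t, fun t => (k t : ℤ) - i t,
      fun t => (k t : ℤ) - j t} with hΔ0
    have h00 : ∀ δ ∈ Δ0, δ ≠ 0 := by
      intro δ hδ
      rw [hΔ0] at hδ
      simp only [Finset.mem_insert, Finset.mem_singleton] at hδ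
      rcases hδ with rfl | rfl | rfl
      · exact fun hz => ht₀ (by rw [congrFun hz t₀]; rfl)
      · exact fun hz => htv (by rw [congrFun hz tv]; rfl)
      · exact fun hz => htw (by rw [congrFun hz tw]; rfl)
    obtain ⟨s, hs, -⟩ := choose_s Δ0 h00 p₀ hp₀2 (fun t => (j t : ℤ) - i t) t₀ hp₀nd
    have hsij : sdot s i ≠ sdot s j := by
      intro hEq
      apply hs (fun t => (j t : ℤ) - i t) (by rw [hΔ0]; simp)
      rw [← sdot_sub]
      omega
    have hsik : sdot s i ≠ sdot s k := by
      intro hEq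
      apply hs (fun t => (k t : ℤ) - i t) (by rw [hΔ0]; simp)
      rw [← sdot_sub]
      omega
    have hsjk : sdot s j ≠ sdot s k := by
      intro hEq
      apply hs (fun t => (k t : ℤ) - j t) (by rw [hΔ0]; simp)
      rw [← sdot_sub]
      omega
    exact not_unit_tri i j k a b c ha hb s hsij hsik hsjk
  · -- factorizations
    intro F G hFG
    by_contra hcon
    push_neg at hcon
    obtain ⟨hFu, hGu⟩ := hcon
    have hPi : MvPolynomial.coeff i (F * G) = a := by
      rw [← hFG, coeff_tri, if_pos rfl, if_neg (fun hh => hij hh.symm),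
        if_neg (fun hh => hik hh.symm)]
      ring
    have hF0 : F ≠ 0 := by
      intro h
      rw [h, zero_mul, MvPolynomial.coeff_zero] at hPi
      exact ha hPi.symm
    have hG0 : G ≠ 0 := by
      intro h
      rw [h, mul_zero, MvPolynomial.coeff_zero] at hPi
      exact ha hPi.symm
    obtain ⟨m₁F, hm₁F, m₂F, hm₂F, hneF⟩ :=
      two_terms i j k a b c ha hb hc hij hik hjk hinf F G hFG hFu hF0
    obtain ⟨m₁G, hm₁G, m₂G, hm₂G, hneG⟩ :=
      two_terms i j k a b c ha hb hc hij hik hjk hinf G F (hFG.trans (mul_comm F G)) hGu hG0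
    have main : ∀ (i' j' k' : Fin n →₀ ℕ) (a' b' c' : K), a' ≠ 0 → b' ≠ 0 → c' ≠ 0 →
        (MvPolynomial.monomial i' a' + MvPolynomial.monomial j' b' +
          MvPolynomial.monomial k' c' = F * G) →
        (∀ α β : ℤ, (∀ t, α * ((j' t : ℤ) - i' t) + β * ((k' t : ℤ) - i' t) = 0) →
          α = 0 ∧ β = 0) →
        (∃ (p₁ : ℕ) (t₁ : Fin n), 2 ≤ p₁ ∧ (¬ (p₁:ℤ) ∣ ((j' t₁ : ℤ) - i' t₁)) ∧
          (∀ gn : ℕ, ¬ (p₁:ℤ) ∣ (gn:ℤ) → gn ≠ 0 → (gn:K) ≠ 0)) → False := by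
      intro i' j' k' a' b' c' ha' hb' hc' hFG' hind' hex
      obtain ⟨p₁, t₁, hp₁2, hw, hcast⟩ := hex
      obtain ⟨r, hru, hrv⟩ := gram (fun t => (j' t : ℤ) - i' t) (fun t => (k' t : ℤ) - i' t)
        hind'
      set Δ : Finset (Fin n → ℤ) :=
        (((F.support ∪ G.support) ×ˢ (F.support ∪ G.support)).filter
          (fun q => q.1 ≠ q.2)).image (fun q => fun t => (q.1 t : ℤ) - q.2 t) ∪
          {fun t => (j' t : ℤ) - i' t} with hΔ
      have h0 : ∀ δ ∈ Δ, δ ≠ 0 := by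
        intro δ hδ
        rw [hΔ, Finset.mem_union] at hδ
        rcases hδ with hδ | hδ
        · rw [Finset.mem_image] at hδ
          obtain ⟨q, hq, rfl⟩ := hδ
          rw [Finset.mem_filter] at hq
          intro hzero
          apply hq.2
          apply Finsupp.ext
          intro t
          have h3 := congrFun hzero t
          simp only [Pi.zero_apply] at h3
          omega
        · rw [Finset.mem_singleton] at hδ
          subst hδ
          intro hzero
          refine absurd (hind' 1 0 (fun t => ?_)).1 one_ne_zero
          have h3 := congrFun hzero t
          simp only [Pi.zero_apply] at h3
          rw [h3]
          ring
      obtain ⟨s, hs, hmod⟩ := choose_s Δ h0 p₁ hp₁2 (fun t => (j' t : ℤ) - i' t) t₁ hw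
      have humem : (fun t => (j' t : ℤ) - i' t) ∈ Δ :=
        Finset.mem_union_right _ (Finset.mem_singleton_self _)
      have hsU : ∑ t, (s t : ℤ) * ((j' t : ℤ) - i' t) ≠ 0 := hs _ humem
      have hinjD : ∀ m ∈ F.support ∪ G.support, ∀ m' ∈ F.support ∪ G.support,
          sdot s m = sdot s m' → rdot r m = rdot r m' → m = m' := by
        intro m hm m' hm' hsd _
        by_contra hne
        have hmem : (fun t => (m t : ℤ) - m' t) ∈ Δ := by
          rw [hΔ]
          apply Finset.mem_union_left
          rw [Finset.mem_image]
          exact ⟨(m, m'), Finset.mem_filter.mpr ⟨Finset.mem_product.mpr ⟨hm, hm'⟩, hne⟩, rfl⟩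
        apply hs _ hmem
        rw [← sdot_sub]
        omega
      have hrij' : rdot r i' = rdot r j' := by
        have h5 := rdot_sub r j' i'
        rw [hru] at h5
        omega
      have hrik' : rdot r i' < rdot r k' := by
        have h5 := rdot_sub r k' i'
        have h6 := hrv
        rw [← h5] at h6
        omega
      have hsne : sdot s i' ≠ sdot s j' := by
        intro hEq
        apply hsU
        rw [← sdot_sub]
        omega
      rcases Ne.lt_or_gt hsne with hlt | hlt
      · have hgK : ((sdot s j' - sdot s i' : ℕ) : K) ≠ 0 := by
          apply hcast _ ?_ (by omega)
          intro hdvd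
          apply hmod
          have hcasteq : ((sdot s j' - sdot s i' : ℕ) : ℤ) = (sdot s j' : ℤ) - sdot s i' := by
            omega
          rw [hcasteq, sdot_sub] at hdvd
          exact hdvd
        exact key_lemma i' j' k' a' b' c' ha' hb' hc' F G hFG' m₁F m₂F hm₁F hm₂F hneF
          m₁G m₂G hm₁G hm₂G hneG s r hinjD hlt hrij' hrik' hgK
      · have hgK : ((sdot s i' - sdot s j' : ℕ) : K) ≠ 0 := by
          apply hcast _ ?_ (by omega)
          intro hdvd
          apply hmod
          have hcasteq : ((sdot s i' - sdot s j' : ℕ) : ℤ) =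
              -((sdot s j' : ℤ) - sdot s i') := by omega
          rw [hcasteq, sdot_sub] at hdvd
          exact (dvd_neg).mp hdvd
        refine key_lemma j' i' k' b' a' c' hb' ha' hc' F G (by rw [← hFG']; ring) m₁F m₂F hm₁F
          hm₂F hneF m₁G m₂G hm₁G hm₂G hneG s r hinjD hlt hrij'.symm ?_ hgK
        rw [← hrij']
        exact hrik'
    rcases CharP.char_is_prime_or_zero K (ringChar K) with hpr | h0c
    · -- positive characteristic
      have hnb : ¬((∀ t, (ringChar K : ℤ) ∣ ((j t : ℤ) - i t)) ∧
          (∀ t, (ringChar K : ℤ) ∣ ((k t : ℤ) - i t))) := by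
        rintro ⟨hU, hV⟩
        apply hchar
        have hdall : ∀ t, (ringChar K : ℤ) ∣ ((i t : ℕ) : ℤ) ∧
            (ringChar K : ℤ) ∣ ((j t : ℕ) : ℤ) ∧ (ringChar K : ℤ) ∣ ((k t : ℕ) : ℤ) := by
          intro t
          have d1 := hU t
          have d2 := hV t
          have h4 := hinf t
          have hm : i t = 0 ∨ j t = 0 ∨ k t = 0 := by omega
          rcases hm with h | h | h
          · have hi0 : ((i t : ℕ) : ℤ) = 0 := by rw [h]; simp
            refine ⟨by rw [hi0]; exact dvd_zero _, by rwa [hi0, sub_zero] at d1, by rwa [hi0, sub_zero] at d2⟩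
          · have hj0 : ((j t : ℕ) : ℤ) = 0 := by rw [h]; simp
            rw [hj0, zero_sub] at d1
            have hii := (dvd_neg).mp d1
            refine ⟨hii, by rw [hj0]; exact dvd_zero _, ?_⟩
            have h5 : ((k t : ℕ) : ℤ) = (((k t : ℕ) : ℤ) - i t) + i t := by ring
            rw [h5]
            exact dvd_add d2 hii
          · have hk0 : ((k t : ℕ) : ℤ) = 0 := by rw [h]; simp
            rw [hk0, zero_sub] at d2
            have hii := (dvd_neg).mp d2
            refine ⟨hii, ?_, by rw [hk0]; exact dvd_zero _⟩
            have h5 : ((j t : ℕ) : ℤ) = (((j t : ℕ) : ℤ) - i t) + i t := by ring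
            rw [h5]
            exact dvd_add d1 hii
        exact ⟨ringChar K, hpr, ringChar.charP K,
          fun t => Int.natCast_dvd_natCast.mp (hdall t).1,
          fun t => Int.natCast_dvd_natCast.mp (hdall t).2.1,
          fun t => Int.natCast_dvd_natCast.mp (hdall t).2.2⟩
      haveI hCP : CharP K (ringChar K) := ringChar.charP K
      have hcast : ∀ gn : ℕ, ¬ (ringChar K : ℤ) ∣ (gn : ℤ) → gn ≠ 0 → (gn : K) ≠ 0 := by
        intro gn hnd _ hz
        exact hnd (Int.natCast_dvd_natCast.mpr
          ((CharP.cast_eq_zero_iff K (ringChar K) gn).mp hz))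
      by_cases hU : ∀ t, (ringChar K : ℤ) ∣ ((j t : ℤ) - i t)
      · have hV : ∃ t, ¬ (ringChar K : ℤ) ∣ ((k t : ℤ) - i t) := by
          by_contra hv
          push_neg at hv
          exact hnb ⟨hU, hv⟩
        obtain ⟨t₁, ht₁⟩ := hV
        apply main i k j a c b ha hc hb (by rw [← hFG]; ring) ?_
          ⟨ringChar K, t₁, hpr.two_le, ht₁, hcast⟩
        intro α β hrel
        have h6 := hind β α (fun t => by have := hrel t; linarith)
        exact ⟨h6.2, h6.1⟩
      · push_neg at hU
        obtain ⟨t₁, ht₁⟩ := hU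
        exact main i j k a b c ha hb hc hFG hind ⟨ringChar K, t₁, hpr.two_le, ht₁, hcast⟩
    · -- characteristic zero
      haveI hCP : CharP K 0 := by rw [← h0c]; exact ringChar.charP K
      haveI : CharZero K := CharP.charP_to_charZero K
      exact main i j k a b c ha hb hc hFG hind
        ⟨p₀, t₀, hp₀2, hp₀nd, fun gn _ hgn => Nat.cast_ne_zero.mpr hgn⟩
end

section
/- Let K be an algebraically closed field, I', I'', I ⊆ ℕⁿ finite nonempty with I ⊆ I' + I'', ℓ: ℤⁿ → ℤ^m a linear map injective on I' + I'', and a', a'' ∈ ℤ^m with a' + ℓ(I') ⊆ ℕ^m and a'' + ℓ(I'') ⊆ ℕ^m. Then there exist P, Q ∈ K[X₁,…,Xₙ] with I(P) = I', I(Q) = I'', I(PQ) = I if and only if there exist P̃, Q̃ ∈ K[Y₁,…,Y_m] with I(P̃) = a' + ℓ(I'), I(Q̃) = a'' + ℓ(I''), I(P̃Q̃) = a' + a'' + ℓ(I). -/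
open Pointwise

section Aux
open MvPolynomial

variable {K : Type*} [CommSemiring K] {n m : ℕ}

noncomputable def ψa (ℓ : (Fin n → ℤ) →ₗ[ℤ] (Fin m → ℤ)) (a : Fin m → ℤ)
    (i : Fin n →₀ ℕ) : Fin m →₀ ℕ :=
  Finsupp.equivFunOnFinite.symm fun t => (a t + ℓ (fun u => (i u : ℤ)) t).toNat

lemma cm_ψa (ℓ : (Fin n → ℤ) →ₗ[ℤ] (Fin m → ℤ)) (a : Fin m → ℤ) (i : Fin n →₀ ℕ)
    (h : ∀ t, 0 ≤ a t + ℓ (fun u => (i u : ℤ)) t) :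
    (fun t => ((ψa ℓ a i) t : ℤ)) = a + ℓ (fun u => (i u : ℤ)) := by
  funext t
  simp only [ψa, Finsupp.coe_equivFunOnFinite_symm, Pi.add_apply]
  exact Int.toNat_of_nonneg (h t)

lemma ℓadd (ℓ : (Fin n → ℤ) →ₗ[ℤ] (Fin m → ℤ)) (i j : Fin n →₀ ℕ) :
    ℓ (fun u => ((i + j) u : ℤ)) = ℓ (fun u => (i u : ℤ)) + ℓ (fun u => (j u : ℤ)) := by
  rw [← map_add]
  congr 1

lemma cinj : Function.Injective (fun d : Fin n →₀ ℕ => fun t => (d t : ℤ)) := by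
  intro d e h
  ext t
  have : ((d t : ℤ)) = (e t : ℤ) := congrFun h t
  exact_mod_cast this

lemma cmadd (d e : Fin m →₀ ℕ) :
    (fun t => ((d + e) t : ℤ)) = (fun t => (d t : ℤ)) + (fun t => (e t : ℤ)) := by
  funext t; simp

lemma support_sum_monomial'' {n' m' : ℕ} (s : Finset (Fin n' →₀ ℕ)) (f : (Fin n' →₀ ℕ) → (Fin m' →₀ ℕ))
    (hf : Set.InjOn f s) (c : (Fin n' →₀ ℕ) → K) (hc : ∀ i ∈ s, c i ≠ 0) :
    (∑ i ∈ s, (monomial (f i) (c i) : MvPolynomial (Fin m') K)).support = s.image f := by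
  ext d
  simp only [mem_support_iff, Finset.mem_image, coeff_sum, coeff_monomial]
  constructor
  · intro h
    obtain ⟨i, hi, hne⟩ := Finset.exists_ne_zero_of_sum_ne_zero h
    refine ⟨i, hi, ?_⟩
    by_contra hcon
    simp [hcon] at hne
  · rintro ⟨i, hi, rfl⟩
    rw [Finset.sum_eq_single_of_mem i hi]
    · simpa using hc i hi
    · intro j hj hji
      have : f j ≠ f i := fun h => hji (hf hj hi h)
      simp [this]

lemma coeff_sum_monomial'' {n' m' : ℕ} (s : Finset (Fin n' →₀ ℕ)) (f : (Fin n' →₀ ℕ) → (Fin m' →₀ ℕ))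
    (hf : Set.InjOn f s) (c : (Fin n' →₀ ℕ) → K) {i} (hi : i ∈ s) :
    (∑ j ∈ s, (monomial (f j) (c j) : MvPolynomial (Fin m') K)).coeff (f i) = c i := by
  rw [coeff_sum, Finset.sum_eq_single_of_mem i hi]
  · simp [coeff_monomial]
  · intro j hj hji
    have : f j ≠ f i := fun h => hji (hf hj hi h)
    simp [coeff_monomial, this]

lemma core {I' I'' : Finset (Fin n →₀ ℕ)}
    {ψ' ψ'' ψ : (Fin n →₀ ℕ) → (Fin m →₀ ℕ)}
    (hadd : ∀ i ∈ I', ∀ j ∈ I'', ψ' i + ψ'' j = ψ (i + j))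
    (hψ : Set.InjOn ψ (I' + I'' : Finset _))
    (P Q : MvPolynomial (Fin n) K) (hP : P.support = I') (hQ : Q.support = I'')
    (Pt Qt : MvPolynomial (Fin m) K)
    (hPt : Pt = ∑ i ∈ I', monomial (ψ' i) (P.coeff i))
    (hQt : Qt = ∑ j ∈ I'', monomial (ψ'' j) (Q.coeff j)) :
    (Pt * Qt).support = (P * Q).support.image ψ := by
  have hPQ : P * Q = ∑ i ∈ I', ∑ j ∈ I'', monomial (i + j) (P.coeff i * Q.coeff j) := by
    conv_lhs => rw [← support_sum_monomial_coeff P, ← support_sum_monomial_coeff Q, hP, hQ]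
    rw [Finset.sum_mul_sum]
    simp [monomial_mul]
  have hPtQt : Pt * Qt = ∑ i ∈ I', ∑ j ∈ I'', monomial (ψ (i + j)) (P.coeff i * Q.coeff j) := by
    rw [hPt, hQt, Finset.sum_mul_sum]
    refine Finset.sum_congr rfl fun i hi => Finset.sum_congr rfl fun j hj => ?_
    rw [monomial_mul, hadd i hi j hj]
  have hcoeff : ∀ k ∈ (I' + I'' : Finset _), (Pt * Qt).coeff (ψ k) = (P * Q).coeff k := by
    intro k hk
    rw [hPQ, hPtQt]
    simp only [coeff_sum, coeff_monomial]
    refine Finset.sum_congr rfl fun i hi => Finset.sum_congr rfl fun j hj => ?_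
    have hmem : i + j ∈ I' + I'' := Finset.add_mem_add hi hj
    by_cases h : i + j = k
    · simp [h]
    · have hne : ψ (i + j) ≠ ψ k := fun hc => h (hψ (by exact_mod_cast hmem) (by exact_mod_cast hk) hc)
      simp [h, hne]
  have hsubPQ : (P * Q).support ⊆ I' + I'' := by
    refine (support_mul P Q).trans ?_
    rw [hP, hQ]
  have hsubPt : (Pt * Qt).support ⊆ (I' + I'').image ψ := by
    intro d hd
    have hd' : d ∈ (∑ i ∈ I', ∑ j ∈ I'', monomial (ψ (i + j))
        (P.coeff i * Q.coeff j) : MvPolynomial (Fin m) K).support := by rwa [← hPtQt]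
    rw [mem_support_iff] at hd'
    simp only [coeff_sum, coeff_monomial] at hd'
    obtain ⟨i, hi, h1⟩ := Finset.exists_ne_zero_of_sum_ne_zero hd'
    obtain ⟨j, hj, h2⟩ := Finset.exists_ne_zero_of_sum_ne_zero h1
    have : ψ (i + j) = d := by
      by_contra hcon; simp [hcon] at h2
    exact Finset.mem_image.2 ⟨i + j, Finset.add_mem_add hi hj, this⟩
  ext d
  constructor
  · intro hd
    obtain ⟨k, hk, rfl⟩ := Finset.mem_image.1 (hsubPt hd)
    rw [mem_support_iff] at hd
    rw [hcoeff k hk] at hd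
    exact Finset.mem_image.2 ⟨k, mem_support_iff.2 hd, rfl⟩
  · intro hd
    obtain ⟨k, hk, rfl⟩ := Finset.mem_image.1 hd
    have hk' : k ∈ I' + I'' := hsubPQ hk
    rw [mem_support_iff, hcoeff k hk']
    exact mem_support_iff.1 hk

end Aux

open MvPolynomial in
theorem stmt19 {K : Type*} [Field K] [IsAlgClosed K] (n m : ℕ)
    (I' I'' I : Finset (Fin n →₀ ℕ)) (h' : I'.Nonempty) (h'' : I''.Nonempty)
    (hne : I.Nonempty) (hII : I ⊆ I' + I'')
    (ℓ : (Fin n → ℤ) →ₗ[ℤ] (Fin m → ℤ))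
    (hinj : Set.InjOn (fun d => ℓ d)
      ((fun d : Fin n →₀ ℕ => fun t => (d t : ℤ)) '' ↑(I' + I'')))
    (a' a'' : Fin m → ℤ)
    (ha' : ∀ i ∈ I', ∀ t, 0 ≤ a' t + ℓ (fun u => (i u : ℤ)) t)
    (ha'' : ∀ j ∈ I'', ∀ t, 0 ≤ a'' t + ℓ (fun u => (j u : ℤ)) t) :
    (∃ P Q : MvPolynomial (Fin n) K,
        P.support = I' ∧ Q.support = I'' ∧ (P * Q).support = I)
    ↔ (∃ Pt Qt : MvPolynomial (Fin m) K,
        ((fun d : Fin m →₀ ℕ => fun t => (d t : ℤ)) '' ↑Pt.support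
          = (fun i : Fin n →₀ ℕ => a' + ℓ (fun u => (i u : ℤ))) '' ↑I') ∧
        ((fun d : Fin m →₀ ℕ => fun t => (d t : ℤ)) '' ↑Qt.support
          = (fun j : Fin n →₀ ℕ => a'' + ℓ (fun u => (j u : ℤ))) '' ↑I'') ∧
        ((fun d : Fin m →₀ ℕ => fun t => (d t : ℤ)) '' ↑(Pt * Qt).support
          = (fun k : Fin n →₀ ℕ => a' + a'' + ℓ (fun u => (k u : ℤ))) '' ↑I)) := by
  classical
  set ψ' : (Fin n →₀ ℕ) → (Fin m →₀ ℕ) := ψa ℓ a' with hψ'def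
  set ψ'' : (Fin n →₀ ℕ) → (Fin m →₀ ℕ) := ψa ℓ a'' with hψ''def
  set ψ : (Fin n →₀ ℕ) → (Fin m →₀ ℕ) := ψa ℓ (a' + a'') with hψdef
  -- coordinate maps
  have hA : ∀ i ∈ I', (fun t => ((ψ' i) t : ℤ)) = a' + ℓ (fun u => (i u : ℤ)) :=
    fun i hi => cm_ψa ℓ a' i (ha' i hi)
  have hB : ∀ j ∈ I'', (fun t => ((ψ'' j) t : ℤ)) = a'' + ℓ (fun u => (j u : ℤ)) :=
    fun j hj => cm_ψa ℓ a'' j (ha'' j hj)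
  have hCnn : ∀ k ∈ I' + I'', ∀ t, 0 ≤ (a' + a'') t + ℓ (fun u => (k u : ℤ)) t := by
    intro k hk t
    obtain ⟨i, hi, j, hj, rfl⟩ := Finset.mem_add.1 hk
    rw [ℓadd]
    have := ha' i hi t
    have := ha'' j hj t
    simp only [Pi.add_apply] at *
    linarith
  have hC : ∀ k ∈ I' + I'', (fun t => ((ψ k) t : ℤ)) = a' + a'' + ℓ (fun u => (k u : ℤ)) :=
    fun k hk => cm_ψa ℓ (a' + a'') k (hCnn k hk)
  -- injectivity of ℓ ∘ coe on I' + I''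
  have hℓinj : ∀ k1 ∈ I' + I'', ∀ k2 ∈ I' + I'',
      ℓ (fun u => (k1 u : ℤ)) = ℓ (fun u => (k2 u : ℤ)) → k1 = k2 := by
    intro k1 hk1 k2 hk2 h
    have h1 : (fun t => (k1 t : ℤ)) ∈
        (fun d : Fin n →₀ ℕ => fun t => (d t : ℤ)) '' ↑(I' + I'') :=
      Set.mem_image_of_mem _ (by exact_mod_cast hk1)
    have h2 : (fun t => (k2 t : ℤ)) ∈
        (fun d : Fin n →₀ ℕ => fun t => (d t : ℤ)) '' ↑(I' + I'') :=
      Set.mem_image_of_mem _ (by exact_mod_cast hk2)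
    exact cinj (hinj h1 h2 h)
  have hψinj : Set.InjOn ψ (I' + I'' : Finset _) := by
    intro k1 hk1 k2 hk2 h
    have hk1' : k1 ∈ I' + I'' := by exact_mod_cast hk1
    have hk2' : k2 ∈ I' + I'' := by exact_mod_cast hk2
    have : a' + a'' + ℓ (fun u => (k1 u : ℤ)) = a' + a'' + ℓ (fun u => (k2 u : ℤ)) := by
      rw [← hC k1 hk1', ← hC k2 hk2', h]
    exact hℓinj k1 hk1' k2 hk2' (by exact add_left_cancel this)
  have hψ'inj : Set.InjOn ψ' (I' : Set _) := by
    intro i1 hi1 i2 hi2 h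
    have hi1' : i1 ∈ I' := by exact_mod_cast hi1
    have hi2' : i2 ∈ I' := by exact_mod_cast hi2
    obtain ⟨j0, hj0⟩ := h''
    have hll : ℓ (fun u => (i1 u : ℤ)) = ℓ (fun u => (i2 u : ℤ)) := by
      have : a' + ℓ (fun u => (i1 u : ℤ)) = a' + ℓ (fun u => (i2 u : ℤ)) := by
        rw [← hA i1 hi1', ← hA i2 hi2', h]
      exact add_left_cancel this
    have : i1 + j0 = i2 + j0 := by
      refine hℓinj _ (Finset.add_mem_add hi1' hj0) _ (Finset.add_mem_add hi2' hj0) ?_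
      rw [ℓadd, ℓadd, hll]
    exact add_right_cancel this
  have hψ''inj : Set.InjOn ψ'' (I'' : Set _) := by
    intro j1 hj1 j2 hj2 h
    have hj1' : j1 ∈ I'' := by exact_mod_cast hj1
    have hj2' : j2 ∈ I'' := by exact_mod_cast hj2
    obtain ⟨i0, hi0⟩ := h'
    have hll : ℓ (fun u => (j1 u : ℤ)) = ℓ (fun u => (j2 u : ℤ)) := by
      have : a'' + ℓ (fun u => (j1 u : ℤ)) = a'' + ℓ (fun u => (j2 u : ℤ)) := by
        rw [← hB j1 hj1', ← hB j2 hj2', h]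
      exact add_left_cancel this
    have : i0 + j1 = i0 + j2 := by
      refine hℓinj _ (Finset.add_mem_add hi0 hj1') _ (Finset.add_mem_add hi0 hj2') ?_
      rw [ℓadd, ℓadd, hll]
    exact add_left_cancel this
  have hadd : ∀ i ∈ I', ∀ j ∈ I'', ψ' i + ψ'' j = ψ (i + j) := by
    intro i hi j hj
    apply cinj
    show (fun t => (((ψ' i + ψ'' j)) t : ℤ)) = fun t => ((ψ (i + j)) t : ℤ)
    rw [cmadd, hA i hi, hB j hj, hC (i + j) (Finset.add_mem_add hi hj), ℓadd]
    abel
  constructor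
  · rintro ⟨P, Q, hP, hQ, hPQ⟩
    have hPc : ∀ i ∈ I', P.coeff i ≠ 0 := fun i hi => mem_support_iff.1 (hP ▸ hi)
    have hQc : ∀ j ∈ I'', Q.coeff j ≠ 0 := fun j hj => mem_support_iff.1 (hQ ▸ hj)
    refine ⟨∑ i ∈ I', monomial (ψ' i) (P.coeff i),
            ∑ j ∈ I'', monomial (ψ'' j) (Q.coeff j), ?_, ?_, ?_⟩
    · rw [support_sum_monomial'' I' ψ' hψ'inj _ hPc, Finset.coe_image, Set.image_image]
      exact Set.image_congr fun i hi => hA i hi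
    · rw [support_sum_monomial'' I'' ψ'' hψ''inj _ hQc, Finset.coe_image, Set.image_image]
      exact Set.image_congr fun j hj => hB j hj
    · rw [core hadd hψinj P Q hP hQ _ _ rfl rfl, hPQ, Finset.coe_image, Set.image_image]
      exact Set.image_congr fun k hk => hC k (hII hk)
  · rintro ⟨Pt, Qt, hPt, hQt, hPtQt⟩
    have hcm_inj : Function.Injective
        (Set.image (fun d : Fin m →₀ ℕ => fun t => (d t : ℤ))) := Set.image_injective.2 cinj
    have hPtsupp : Pt.support = I'.image ψ' := by
      apply Finset.coe_injective
      apply hcm_inj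
      rw [hPt, Finset.coe_image, Set.image_image]
      exact (Set.image_congr fun i hi => hA i hi).symm
    have hQtsupp : Qt.support = I''.image ψ'' := by
      apply Finset.coe_injective
      apply hcm_inj
      rw [hQt, Finset.coe_image, Set.image_image]
      exact (Set.image_congr fun j hj => hB j hj).symm
    set P : MvPolynomial (Fin n) K := ∑ i ∈ I', monomial i (Pt.coeff (ψ' i)) with hPdef
    set Q : MvPolynomial (Fin n) K := ∑ j ∈ I'', monomial j (Qt.coeff (ψ'' j)) with hQdef
    have hPc : ∀ i ∈ I', Pt.coeff (ψ' i) ≠ 0 := by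
      intro i hi
      have : ψ' i ∈ Pt.support := by
        rw [hPtsupp]; exact Finset.mem_image_of_mem _ hi
      exact mem_support_iff.1 this
    have hQc : ∀ j ∈ I'', Qt.coeff (ψ'' j) ≠ 0 := by
      intro j hj
      have : ψ'' j ∈ Qt.support := by
        rw [hQtsupp]; exact Finset.mem_image_of_mem _ hj
      exact mem_support_iff.1 this
    have hPsupp : P.support = I' := by
      rw [hPdef]
      simpa using support_sum_monomial'' I' id (Set.injOn_id _) _ hPc
    have hQsupp : Q.support = I'' := by
      rw [hQdef]
      simpa using support_sum_monomial'' I'' id (Set.injOn_id _) _ hQc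
    have hPcoeff : ∀ i ∈ I', P.coeff i = Pt.coeff (ψ' i) := by
      intro i hi
      rw [hPdef]
      simpa using coeff_sum_monomial'' I' id (Set.injOn_id _) (fun i => Pt.coeff (ψ' i)) hi
    have hQcoeff : ∀ j ∈ I'', Q.coeff j = Qt.coeff (ψ'' j) := by
      intro j hj
      rw [hQdef]
      simpa using coeff_sum_monomial'' I'' id (Set.injOn_id _) (fun j => Qt.coeff (ψ'' j)) hj
    have hPtEq : Pt = ∑ i ∈ I', monomial (ψ' i) (P.coeff i) := by
      conv_lhs => rw [← support_sum_monomial_coeff Pt]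
      rw [hPtsupp, Finset.sum_image fun x hx y hy h => hψ'inj hx hy h]
      exact Finset.sum_congr rfl fun i hi => by rw [hPcoeff i hi]
    have hQtEq : Qt = ∑ j ∈ I'', monomial (ψ'' j) (Q.coeff j) := by
      conv_lhs => rw [← support_sum_monomial_coeff Qt]
      rw [hQtsupp, Finset.sum_image fun x hx y hy h => hψ''inj hx hy h]
      exact Finset.sum_congr rfl fun j hj => by rw [hQcoeff j hj]
    have hcore := core hadd hψinj P Q hPsupp hQsupp Pt Qt hPtEq hQtEq
    refine ⟨P, Q, hPsupp, hQsupp, ?_⟩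
    have hsubPQ : ((P * Q).support : Set (Fin n →₀ ℕ)) ⊆ (I' + I'' : Finset _) := by
      intro k hk
      have : (P * Q).support ⊆ I' + I'' := by
        refine (support_mul P Q).trans ?_
        rw [hPsupp, hQsupp]
      exact_mod_cast this (by exact_mod_cast hk)
    have hsubI : (I : Set (Fin n →₀ ℕ)) ⊆ (I' + I'' : Finset _) := by
      intro k hk; exact_mod_cast hII (by exact_mod_cast hk)
    have hcψinj : Set.InjOn (fun k => (fun t => ((ψ k) t : ℤ))) (I' + I'' : Finset _) := by
      intro k1 hk1 k2 hk2 h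
      have hk1' : k1 ∈ I' + I'' := by exact_mod_cast hk1
      have hk2' : k2 ∈ I' + I'' := by exact_mod_cast hk2
      have : a' + a'' + ℓ (fun u => (k1 u : ℤ)) = a' + a'' + ℓ (fun u => (k2 u : ℤ)) := by
        rw [← hC k1 hk1', ← hC k2 hk2']; exact h
      exact hℓinj k1 hk1' k2 hk2' (add_left_cancel this)
    have himg : (fun k => (fun t => ((ψ k) t : ℤ))) '' ((P * Q).support : Set _)
        = (fun k => (fun t => ((ψ k) t : ℤ))) '' (I : Set _) := by
      have h1 : (fun k => (fun t => ((ψ k) t : ℤ))) '' ((P * Q).support : Set _)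
          = (fun k : Fin n →₀ ℕ => a' + a'' + ℓ (fun u => (k u : ℤ))) '' ↑I := by
        rw [← hPtQt, hcore, Finset.coe_image, Set.image_image]
      have h2 : (fun k => (fun t => ((ψ k) t : ℤ))) '' (I : Set _)
          = (fun k : Fin n →₀ ℕ => a' + a'' + ℓ (fun u => (k u : ℤ))) '' ↑I :=
        Set.image_congr fun k hk => hC k (hII hk)
      rw [h1, h2]
    have := (hcψinj.image_eq_image_iff hsubPQ hsubI).1 himg
    exact_mod_cast Finset.coe_injective this
end
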